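/- Let expit(u) = e^u/(1+e^u). Suppose parameters (a, b, β₀, β₁) with 0 ≤ a < 1, b > 0 and (a', b', β₀', β₁') with 0 ≤ a' < 1, b' > 0 satisfy a + b·expit(β₀ + β₁x) = a' + b'·expit(β₀' + β₁'x) for all x ∈ ℝ. If β₁ ≠ 0, then (a, b, β₀, β₁) = (a', b', β₀', β₁'). -/

import Mathlib

open Filter Topology

noncomputable def expit (u : ℝ) : ℝ := Real.exp u / (1 + Real.exp u)

lemma expit_inj : Function.Injective expit := by
  intro u v h
  have hu : 0 < 1 + Real.exp u := by positivity
  have hv : 0 < 1 + Real.exp v := by positivity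
  unfold expit at h
  have h2 : Real.exp u = Real.exp v := by
    field_simp at h
    nlinarith [Real.exp_pos u, Real.exp_pos v]
  exact Real.exp_injective h2

lemma tendsto_expit_atTop : Tendsto expit atTop (𝓝 1) := by
  have h1 : Tendsto (fun u : ℝ => 1 + Real.exp u) atTop atTop :=
    tendsto_atTop_add_const_left _ _ Real.tendsto_exp_atTop
  have h2 : Tendsto (fun u : ℝ => (1 + Real.exp u)⁻¹) atTop (𝓝 0) :=
    h1.inv_tendsto_atTop
  have h3 : Tendsto (fun u : ℝ => 1 - (1 + Real.exp u)⁻¹) atTop (𝓝 (1 - 0)) :=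
    tendsto_const_nhds.sub h2
  simp only [sub_zero] at h3
  convert h3 using 2 with u
  have : (0:ℝ) < 1 + Real.exp u := by positivity
  unfold expit
  field_simp
  ring

lemma tendsto_expit_atBot : Tendsto expit atBot (𝓝 0) := by
  have h1 : Tendsto (fun u : ℝ => Real.exp u) atBot (𝓝 0) := Real.tendsto_exp_atBot
  have h2 : Tendsto (fun u : ℝ => 1 + Real.exp u) atBot (𝓝 (1 + 0)) :=
    tendsto_const_nhds.add h1
  have := h1.div h2 (by norm_num)
  rw [zero_div] at this
  exact this

lemma lin_top_pos (β₀ β₁ : ℝ) (h : 0 < β₁) :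
    Tendsto (fun x : ℝ => β₀ + β₁ * x) atTop atTop :=
  tendsto_atTop_add_const_left _ _ (Tendsto.const_mul_atTop h tendsto_id)

lemma lin_bot_pos (β₀ β₁ : ℝ) (h : 0 < β₁) :
    Tendsto (fun x : ℝ => β₀ + β₁ * x) atBot atBot :=
  tendsto_atBot_add_const_left _ _ (Tendsto.const_mul_atBot h tendsto_id)

lemma lin_top_neg (β₀ β₁ : ℝ) (h : β₁ < 0) :
    Tendsto (fun x : ℝ => β₀ + β₁ * x) atTop atBot :=
  tendsto_atBot_add_const_left _ _ (Tendsto.const_mul_atTop_of_neg h tendsto_id)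

lemma lin_bot_neg (β₀ β₁ : ℝ) (h : β₁ < 0) :
    Tendsto (fun x : ℝ => β₀ + β₁ * x) atBot atTop :=
  tendsto_atTop_add_const_left _ _ (Tendsto.const_mul_atBot_of_neg h tendsto_id)

theorem global_identifiability_continuum (a b β₀ β₁ a' b' β₀' β₁' : ℝ)
    (ha : 0 ≤ a) (ha1 : a < 1) (hb : 0 < b)
    (ha' : 0 ≤ a') (ha1' : a' < 1) (hb' : 0 < b')
    (heq : ∀ x : ℝ, a + b * expit (β₀ + β₁ * x) = a' + b' * expit (β₀' + β₁' * x))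
    (hβ₁ : β₁ ≠ 0) :
    a = a' ∧ b = b' ∧ β₀ = β₀' ∧ β₁ = β₁' := by
  have hfun : (fun x : ℝ => a + b * expit (β₀ + β₁ * x))
      = fun x : ℝ => a' + b' * expit (β₀' + β₁' * x) := funext heq
  -- limits of f at top/bot
  have hlim : ∀ (c d γ₀ γ₁ : ℝ),
      (0 < γ₁ → Tendsto (fun x : ℝ => c + d * expit (γ₀ + γ₁ * x)) atTop (𝓝 (c + d))
        ∧ Tendsto (fun x : ℝ => c + d * expit (γ₀ + γ₁ * x)) atBot (𝓝 c))
      ∧ (γ₁ < 0 → Tendsto (fun x : ℝ => c + d * expit (γ₀ + γ₁ * x)) atTop (𝓝 c)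
        ∧ Tendsto (fun x : ℝ => c + d * expit (γ₀ + γ₁ * x)) atBot (𝓝 (c + d))) := by
    intro c d γ₀ γ₁
    constructor
    · intro h
      constructor
      · have := (tendsto_const_nhds : Tendsto (fun _ : ℝ => c) atTop (𝓝 c)).add
          ((tendsto_expit_atTop.comp (lin_top_pos γ₀ γ₁ h)).const_mul d)
        simpa [Function.comp, mul_one] using this
      · have := (tendsto_const_nhds : Tendsto (fun _ : ℝ => c) atBot (𝓝 c)).add
          ((tendsto_expit_atBot.comp (lin_bot_pos γ₀ γ₁ h)).const_mul d)
        simpa [Function.comp] using this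
    · intro h
      constructor
      · have := (tendsto_const_nhds : Tendsto (fun _ : ℝ => c) atTop (𝓝 c)).add
          ((tendsto_expit_atBot.comp (lin_top_neg γ₀ γ₁ h)).const_mul d)
        simpa [Function.comp] using this
      · have := (tendsto_const_nhds : Tendsto (fun _ : ℝ => c) atBot (𝓝 c)).add
          ((tendsto_expit_atTop.comp (lin_bot_neg γ₀ γ₁ h)).const_mul d)
        simpa [Function.comp, mul_one] using this
  -- establish a = a' and b = b'
  have hab : a = a' ∧ b = b' ∧ β₁' ≠ 0 ∧ (0 < β₁ ↔ 0 < β₁') := by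
    rcases lt_or_gt_of_ne hβ₁ with h1 | h1
    · have hf := (hlim a b β₀ β₁).2 h1
      rcases lt_trichotomy β₁' 0 with h2 | h2 | h2
      · have hg := (hlim a' b' β₀' β₁').2 h2
        have e1 := tendsto_nhds_unique (hfun ▸ hf.1) hg.1
        have e2 := tendsto_nhds_unique (hfun ▸ hf.2) hg.2
        exact ⟨e1, by linarith, h2.ne, by constructor <;> intro <;> linarith⟩
      · exfalso
        subst h2
        have hg1 : Tendsto (fun x : ℝ => a' + b' * expit (β₀' + 0 * x)) atTop
            (𝓝 (a' + b' * expit β₀')) := by simpa using (tendsto_const_nhds :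
              Tendsto (fun _ : ℝ => a' + b' * expit β₀') atTop _)
        have hg2 : Tendsto (fun x : ℝ => a' + b' * expit (β₀' + 0 * x)) atBot
            (𝓝 (a' + b' * expit β₀')) := by simpa using (tendsto_const_nhds :
              Tendsto (fun _ : ℝ => a' + b' * expit β₀') atBot _)
        have e1 := tendsto_nhds_unique (hfun ▸ hf.1) hg1
        have e2 := tendsto_nhds_unique (hfun ▸ hf.2) hg2
        linarith
      · exfalso
        have hg := (hlim a' b' β₀' β₁').1 h2
        have e1 := tendsto_nhds_unique (hfun ▸ hf.1) hg.1
        have e2 := tendsto_nhds_unique (hfun ▸ hf.2) hg.2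
        linarith
    · have hf := (hlim a b β₀ β₁).1 h1
      rcases lt_trichotomy β₁' 0 with h2 | h2 | h2
      · exfalso
        have hg := (hlim a' b' β₀' β₁').2 h2
        have e1 := tendsto_nhds_unique (hfun ▸ hf.1) hg.1
        have e2 := tendsto_nhds_unique (hfun ▸ hf.2) hg.2
        linarith
      · exfalso
        subst h2
        have hg1 : Tendsto (fun x : ℝ => a' + b' * expit (β₀' + 0 * x)) atTop
            (𝓝 (a' + b' * expit β₀')) := by simpa using (tendsto_const_nhds :
              Tendsto (fun _ : ℝ => a' + b' * expit β₀') atTop _)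
        have hg2 : Tendsto (fun x : ℝ => a' + b' * expit (β₀' + 0 * x)) atBot
            (𝓝 (a' + b' * expit β₀')) := by simpa using (tendsto_const_nhds :
              Tendsto (fun _ : ℝ => a' + b' * expit β₀') atBot _)
        have e1 := tendsto_nhds_unique (hfun ▸ hf.1) hg1
        have e2 := tendsto_nhds_unique (hfun ▸ hf.2) hg2
        linarith
      · have hg := (hlim a' b' β₀' β₁').1 h2
        have e1 := tendsto_nhds_unique (hfun ▸ hf.1) hg.1
        have e2 := tendsto_nhds_unique (hfun ▸ hf.2) hg.2
        exact ⟨e2, by linarith, h2.ne', by constructor <;> intro <;> linarith⟩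
  obtain ⟨haa, hbb, hb1', _⟩ := hab
  subst haa hbb
  have hlin : ∀ x : ℝ, β₀ + β₁ * x = β₀' + β₁' * x := by
    intro x
    have h := heq x
    have : expit (β₀ + β₁ * x) = expit (β₀' + β₁' * x) := by
      have := mul_left_cancel₀ hb.ne' (by linarith : b * expit (β₀ + β₁ * x) = b * expit (β₀' + β₁' * x))
      exact this
    exact expit_inj this
  have h0 := hlin 0
  have h1 := hlin 1
  refine ⟨rfl, rfl, by linarith, by linarith⟩
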